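/- arXiv:1210.5121 — 6 statements merged into one kernel-verified Lean document; each statement's English description precedes it below -/
import Mathlib

section
/- If k1 and k2 are functions on finite configurations satisfying |k_i(η)| ≤ M_i · C_i^{|η|} · (|η|!)^{δ_i} for constants C_i > 0, δ_i ≥ 0, then their Ruelle convolution satisfies |(k1 * k2)(η)| ≤ M_1 M_2 · (C_1 + C_2)^{|η|} · (|η|!)^{δ} where δ = max{δ_1, δ_2}. -/
open Finset

variable {X : Type*} [DecidableEq X]

/-- Ruelle convolution of functions on finite configurations. -/
noncomputable def conv (G1 G2 : Finset X → ℝ) (η : Finset X) : ℝ :=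
  ∑ ξ ∈ η.powerset, G1 ξ * G2 (η \ ξ)

/-- The unit `1^*` for the Ruelle convolution. -/
noncomputable def oneStar (η : Finset X) : ℝ := if η = ∅ then 1 else 0

/-- n-fold Ruelle convolution power. -/
noncomputable def convPow (k : Finset X → ℝ) : ℕ → Finset X → ℝ
  | 0 => oneStar
  | n + 1 => conv k (convPow k n)

/-- `exp^* u`; a pointwise finite sum when `u ∅ = 0`, since then
`u^{*n}(η) = 0` for `n > |η|`. -/
noncomputable def expStar (u : Finset X → ℝ) (η : Finset X) : ℝ :=
  ∑ n ∈ Finset.range (η.card + 1), ((n.factorial : ℝ))⁻¹ * convPow u n η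

/-- `ln^* k`; a pointwise finite sum when `k ∅ = 1`. -/
noncomputable def lnStar (k : Finset X → ℝ) (η : Finset X) : ℝ :=
  ∑ n ∈ Finset.Icc 1 η.card,
    ((-1 : ℝ) ^ (n - 1) / n) * convPow (fun ξ => k ξ - oneStar ξ) n η

theorem conv_young (k1 k2 : Finset X → ℝ) (C1 C2 δ1 δ2 M1 M2 : ℝ)
    (hC1 : 0 < C1) (hC2 : 0 < C2) (hδ1 : 0 ≤ δ1) (hδ2 : 0 ≤ δ2)
    (h1 : ∀ η : Finset X, |k1 η| ≤ M1 * C1 ^ η.card * (η.card.factorial : ℝ) ^ δ1)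
    (h2 : ∀ η : Finset X, |k2 η| ≤ M2 * C2 ^ η.card * (η.card.factorial : ℝ) ^ δ2) :
    ∀ η : Finset X, |conv k1 k2 η| ≤
      M1 * M2 * (C1 + C2) ^ η.card * (η.card.factorial : ℝ) ^ (max δ1 δ2) := by

  intro η
  have hM1 : 0 ≤ M1 := by
    have := (abs_nonneg (k1 ∅)).trans (h1 ∅)
    simpa using this
  have hM2 : 0 ≤ M2 := by
    have := (abs_nonneg (k2 ∅)).trans (h2 ∅)
    simpa using this
  have key : ∀ ξ ∈ η.powerset, |k1 ξ * k2 (η \ ξ)| ≤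
      M1 * M2 * (C1 ^ ξ.card * C2 ^ (η \ ξ).card) *
        (η.card.factorial : ℝ) ^ (max δ1 δ2) := by
    intro ξ hξ
    have hsub : ξ ⊆ η := Finset.mem_powerset.mp hξ
    have hcard : ξ.card + (η \ ξ).card = η.card := by
      rw [Finset.card_sdiff_of_subset hsub]
      exact Nat.add_sub_cancel' (Finset.card_le_card hsub)
    have ha1 : (1:ℝ) ≤ (ξ.card.factorial : ℝ) := by
      exact_mod_cast Nat.one_le_iff_ne_zero.mpr (Nat.factorial_pos _).ne'
    have hb1 : (1:ℝ) ≤ ((η \ ξ).card.factorial : ℝ) := by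
      exact_mod_cast Nat.one_le_iff_ne_zero.mpr (Nat.factorial_pos _).ne'
    have hfac : ((ξ.card.factorial : ℝ)) ^ δ1 * (((η \ ξ).card.factorial : ℝ)) ^ δ2 ≤
        (η.card.factorial : ℝ) ^ (max δ1 δ2) := by
      have hab : (ξ.card.factorial * (η \ ξ).card.factorial : ℕ) ≤ η.card.factorial := by
        rw [← hcard]
        exact Nat.le_of_dvd (Nat.factorial_pos _)
          (Nat.factorial_mul_factorial_dvd_factorial_add _ _)
      calc ((ξ.card.factorial : ℝ)) ^ δ1 * (((η \ ξ).card.factorial : ℝ)) ^ δ2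
          ≤ ((ξ.card.factorial : ℝ)) ^ (max δ1 δ2) *
              (((η \ ξ).card.factorial : ℝ)) ^ (max δ1 δ2) := by
            apply mul_le_mul
            · exact Real.rpow_le_rpow_of_exponent_le ha1 (le_max_left _ _)
            · exact Real.rpow_le_rpow_of_exponent_le hb1 (le_max_right _ _)
            · exact Real.rpow_nonneg (by positivity) _
            · exact Real.rpow_nonneg (by positivity) _
        _ = ((ξ.card.factorial * (η \ ξ).card.factorial : ℕ) : ℝ) ^ (max δ1 δ2) := by
            rw [Nat.cast_mul, Real.mul_rpow (by positivity) (by positivity)]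
        _ ≤ (η.card.factorial : ℝ) ^ (max δ1 δ2) := by
            apply Real.rpow_le_rpow (by positivity) (by exact_mod_cast hab)
              (le_trans hδ1 (le_max_left _ _))
    calc |k1 ξ * k2 (η \ ξ)| = |k1 ξ| * |k2 (η \ ξ)| := abs_mul _ _
      _ ≤ (M1 * C1 ^ ξ.card * (ξ.card.factorial : ℝ) ^ δ1) *
          (M2 * C2 ^ (η \ ξ).card * ((η \ ξ).card.factorial : ℝ) ^ δ2) := by
          apply mul_le_mul (h1 ξ) (h2 (η \ ξ)) (abs_nonneg _)
          positivity
      _ = M1 * M2 * (C1 ^ ξ.card * C2 ^ (η \ ξ).card) *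
          ((ξ.card.factorial : ℝ) ^ δ1 * ((η \ ξ).card.factorial : ℝ) ^ δ2) := by ring
      _ ≤ M1 * M2 * (C1 ^ ξ.card * C2 ^ (η \ ξ).card) *
          (η.card.factorial : ℝ) ^ (max δ1 δ2) := by
          apply mul_le_mul_of_nonneg_left hfac
          positivity
  have hsum : ∑ ξ ∈ η.powerset, C1 ^ ξ.card * C2 ^ (η \ ξ).card = (C1 + C2) ^ η.card := by
    have := Finset.prod_add (fun _ : X => C1) (fun _ : X => C2) η
    simp only [Finset.prod_const] at this
    exact this.symm
  calc |conv k1 k2 η| ≤ ∑ ξ ∈ η.powerset, |k1 ξ * k2 (η \ ξ)| :=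
        Finset.abs_sum_le_sum_abs _ _
    _ ≤ ∑ ξ ∈ η.powerset, M1 * M2 * (C1 ^ ξ.card * C2 ^ (η \ ξ).card) *
          (η.card.factorial : ℝ) ^ (max δ1 δ2) := Finset.sum_le_sum key
    _ = M1 * M2 * (C1 + C2) ^ η.card * (η.card.factorial : ℝ) ^ (max δ1 δ2) := by
        rw [← Finset.sum_mul, ← Finset.mul_sum, hsum]
end

section
/- If δ ≥ 1, C_1 ≠ C_2, and |k_i(η)| ≤ M_i C_i^{|η|} (|η|!)^{δ_i} with δ_i ≤ δ, then |(k1 * k2)(η)| ≤ (C̄/|C_1 − C_2|) · M_1 M_2 · C̄^{|η|} (|η|!)^δ for all finite configurations η, where C̄ = max{C_1, C_2}. -/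
open Finset

variable {X : Type*} [DecidableEq X]

private lemma geom_bound (C1 C2 : ℝ) (hC1 : 0 < C1) (hC2 : 0 < C2) (hC : C1 ≠ C2) (n : ℕ) :
    ∑ j ∈ range (n + 1), C1 ^ j * C2 ^ (n - j) ≤ max C1 C2 ^ (n + 1) / |C1 - C2| := by
  have hne : C1 - C2 ≠ 0 := sub_ne_zero.mpr hC
  have hgeom := geom_sum₂_mul C1 C2 (n + 1)
  have hsum : (∑ j ∈ range (n + 1), C1 ^ j * C2 ^ (n - j))
      = (C1 ^ (n + 1) - C2 ^ (n + 1)) / (C1 - C2) := by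
    rw [eq_div_iff hne, ← hgeom]
    congr 1
  rw [hsum]
  calc (C1 ^ (n + 1) - C2 ^ (n + 1)) / (C1 - C2)
      ≤ |(C1 ^ (n + 1) - C2 ^ (n + 1)) / (C1 - C2)| := le_abs_self _
    _ = |C1 ^ (n + 1) - C2 ^ (n + 1)| / |C1 - C2| := abs_div _ _
    _ ≤ max C1 C2 ^ (n + 1) / |C1 - C2| := by
        gcongr
        rw [abs_sub_le_iff]
        have := pow_le_pow_left₀ hC1.le (le_max_left C1 C2) (n + 1)
        have := pow_le_pow_left₀ hC2.le (le_max_right C1 C2) (n + 1)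
        constructor
        · nlinarith [pow_pos hC2 (n + 1)]
        · nlinarith [pow_pos hC1 (n + 1)]

private lemma fact_bound (δ1 δ2 δ : ℝ) (hδ1 : 0 ≤ δ1) (hδ2 : 0 ≤ δ2) (hδ : 1 ≤ δ)
    (hδ1' : δ1 ≤ δ) (hδ2' : δ2 ≤ δ) {n j : ℕ} (hj : j ≤ n) :
    (n.choose j : ℝ) * ((j.factorial : ℝ) ^ δ1 * ((n - j).factorial : ℝ) ^ δ2)
      ≤ (n.factorial : ℝ) ^ δ := by
  have ha : (1 : ℝ) ≤ (j.factorial : ℝ) := by exact_mod_cast j.factorial_pos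
  have hb : (1 : ℝ) ≤ ((n - j).factorial : ℝ) := by exact_mod_cast (n - j).factorial_pos
  have hcpos : 0 < n.choose j := Nat.choose_pos hj
  have hc : (1 : ℝ) ≤ (n.choose j : ℝ) := by exact_mod_cast hcpos
  have h1 : (j.factorial : ℝ) ^ δ1 ≤ (j.factorial : ℝ) ^ δ :=
    Real.rpow_le_rpow_of_exponent_le ha hδ1'
  have h2 : ((n - j).factorial : ℝ) ^ δ2 ≤ ((n - j).factorial : ℝ) ^ δ :=
    Real.rpow_le_rpow_of_exponent_le hb hδ2'
  have h3 : (n.choose j : ℝ) ≤ (n.choose j : ℝ) ^ δ := by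
    nth_rewrite 1 [← Real.rpow_one (n.choose j : ℝ)]
    exact Real.rpow_le_rpow_of_exponent_le hc hδ
  calc (n.choose j : ℝ) * ((j.factorial : ℝ) ^ δ1 * ((n - j).factorial : ℝ) ^ δ2)
      ≤ (n.choose j : ℝ) ^ δ * ((j.factorial : ℝ) ^ δ * ((n - j).factorial : ℝ) ^ δ) := by
        apply mul_le_mul h3 (mul_le_mul h1 h2 (by positivity) (by positivity)) (by positivity)
        positivity
    _ = ((n.choose j : ℝ) * (j.factorial : ℝ) * ((n - j).factorial : ℝ)) ^ δ := by
        rw [Real.mul_rpow (by positivity) (by positivity),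
          Real.mul_rpow (by positivity) (by positivity), mul_assoc]
    _ = (n.factorial : ℝ) ^ δ := by
        congr 1
        exact_mod_cast congrArg (Nat.cast (R := ℝ)) (Nat.choose_mul_factorial_mul_factorial hj)

theorem conv_young_distinct (k1 k2 : Finset X → ℝ) (C1 C2 δ1 δ2 δ M1 M2 : ℝ)
    (hC1 : 0 < C1) (hC2 : 0 < C2) (hC : C1 ≠ C2)
    (hδ1 : 0 ≤ δ1) (hδ2 : 0 ≤ δ2) (hδ : 1 ≤ δ) (hδ1' : δ1 ≤ δ) (hδ2' : δ2 ≤ δ)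
    (h1 : ∀ η : Finset X, |k1 η| ≤ M1 * C1 ^ η.card * (η.card.factorial : ℝ) ^ δ1)
    (h2 : ∀ η : Finset X, |k2 η| ≤ M2 * C2 ^ η.card * (η.card.factorial : ℝ) ^ δ2) :
    ∀ η : Finset X, |conv k1 k2 η| ≤
      (max C1 C2 / |C1 - C2|) * (M1 * M2) * (max C1 C2) ^ η.card
        * (η.card.factorial : ℝ) ^ δ := by
  have hM1 : 0 ≤ M1 := le_trans (abs_nonneg _) (by simpa using h1 ∅)
  have hM2 : 0 ≤ M2 := le_trans (abs_nonneg _) (by simpa using h2 ∅)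
  intro η
  set n := η.card with hn
  set B : ℕ → ℝ := fun j =>
    (M1 * M2 * (C1 ^ j * C2 ^ (n - j))) * ((n.factorial : ℝ) ^ δ / (n.choose j : ℝ)) with hB
  have hdne : |C1 - C2| ≠ 0 := abs_ne_zero.mpr (sub_ne_zero.mpr hC)
  calc |conv k1 k2 η|
      ≤ ∑ ξ ∈ η.powerset, |k1 ξ * k2 (η \ ξ)| := Finset.abs_sum_le_sum_abs _ _
    _ ≤ ∑ ξ ∈ η.powerset, B ξ.card := by
        apply Finset.sum_le_sum
        intro ξ hξ
        have hsub : ξ ⊆ η := Finset.mem_powerset.mp hξ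
        have hjn : ξ.card ≤ n := Finset.card_le_card hsub
        have hcard : (η \ ξ).card = n - ξ.card := by rw [Finset.card_sdiff_of_subset hsub]
        have hfd : (ξ.card.factorial : ℝ) ^ δ1 * ((n - ξ.card).factorial : ℝ) ^ δ2
            ≤ (n.factorial : ℝ) ^ δ / (n.choose ξ.card : ℝ) := by
          rw [le_div_iff₀ (by exact_mod_cast Nat.choose_pos hjn)]
          rw [mul_comm]
          exact fact_bound δ1 δ2 δ hδ1 hδ2 hδ hδ1' hδ2' hjn
        calc |k1 ξ * k2 (η \ ξ)| = |k1 ξ| * |k2 (η \ ξ)| := abs_mul _ _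
          _ ≤ (M1 * C1 ^ ξ.card * (ξ.card.factorial : ℝ) ^ δ1)
              * (M2 * C2 ^ (n - ξ.card) * ((n - ξ.card).factorial : ℝ) ^ δ2) := by
              have := h2 (η \ ξ)
              rw [hcard] at this
              exact mul_le_mul (h1 ξ) this (abs_nonneg _)
                (le_trans (abs_nonneg _) (h1 ξ))
          _ = (M1 * M2 * (C1 ^ ξ.card * C2 ^ (n - ξ.card)))
              * ((ξ.card.factorial : ℝ) ^ δ1 * ((n - ξ.card).factorial : ℝ) ^ δ2) := by ring
          _ ≤ B ξ.card := by
              exact mul_le_mul_of_nonneg_left hfd (by positivity)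
    _ = ∑ j ∈ range (n + 1), (n.choose j) • B j := by
        rw [hn]
        exact Finset.sum_powerset_apply_card B
    _ = ∑ j ∈ range (n + 1), (M1 * M2 * (n.factorial : ℝ) ^ δ) * (C1 ^ j * C2 ^ (n - j)) := by
        apply Finset.sum_congr rfl
        intro j hj
        have hjn : j ≤ n := Nat.lt_succ_iff.mp (Finset.mem_range.mp hj)
        have hcne : (n.choose j : ℝ) ≠ 0 := by exact_mod_cast (Nat.choose_pos hjn).ne'
        rw [hB, nsmul_eq_mul]
        field_simp
    _ = (M1 * M2 * (n.factorial : ℝ) ^ δ) * ∑ j ∈ range (n + 1), C1 ^ j * C2 ^ (n - j) := by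
        rw [← Finset.mul_sum]
    _ ≤ (M1 * M2 * (n.factorial : ℝ) ^ δ) * (max C1 C2 ^ (n + 1) / |C1 - C2|) := by
        exact mul_le_mul_of_nonneg_left (geom_bound C1 C2 hC1 hC2 hC n) (by positivity)
    _ = (max C1 C2 / |C1 - C2|) * (M1 * M2) * (max C1 C2) ^ n * (n.factorial : ℝ) ^ δ := by
        rw [pow_succ]
        field_simp
end

section
/- If δ ≥ 1, C_1 = C_2 = C, and |k_i(η)| ≤ M_i C^{|η|} (|η|!)^{δ_i} with δ_i ≤ δ, then for any C' > C, |(k1 * k2)(η)| ≤ (C'/(e·C·ln(C'/C))) · M_1 M_2 · (C')^{|η|} (|η|!)^δ for all finite configurations η. -/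
open Finset

variable {X : Type*} [DecidableEq X]

lemma fact_rpow_key (δ1 δ2 δ : ℝ) (hδ : 1 ≤ δ) (hδ1' : δ1 ≤ δ) (hδ2' : δ2 ≤ δ)
    (j n : ℕ) (hj : j ≤ n) :
    ((j.factorial : ℝ)) ^ δ1 * (((n - j).factorial : ℝ)) ^ δ2
      ≤ (n.factorial : ℝ) ^ δ / (n.choose j) := by
  have hc : 0 < (n.choose j : ℝ) := by exact_mod_cast Nat.choose_pos hj
  have hc1 : (1 : ℝ) ≤ (n.choose j : ℝ) := by exact_mod_cast Nat.choose_pos hj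
  have hf1 : (1 : ℝ) ≤ (j.factorial : ℝ) := by exact_mod_cast j.factorial_pos
  have hf2 : (1 : ℝ) ≤ ((n - j).factorial : ℝ) := by exact_mod_cast (n - j).factorial_pos
  have hk : (n.choose j : ℝ) * j.factorial * (n - j).factorial = n.factorial := by
    exact_mod_cast Nat.choose_mul_factorial_mul_factorial hj
  have key : (j.factorial : ℝ) * ((n - j).factorial : ℝ) = (n.factorial : ℝ) / (n.choose j) := by
    rw [eq_div_iff hc.ne']; linear_combination hk
  calc ((j.factorial : ℝ)) ^ δ1 * (((n - j).factorial : ℝ)) ^ δ2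
      ≤ ((j.factorial : ℝ)) ^ δ * (((n - j).factorial : ℝ)) ^ δ :=
        mul_le_mul (Real.rpow_le_rpow_of_exponent_le hf1 hδ1')
          (Real.rpow_le_rpow_of_exponent_le hf2 hδ2')
          (Real.rpow_nonneg (by linarith) _) (Real.rpow_nonneg (by linarith) _)
    _ = ((j.factorial : ℝ) * ((n - j).factorial : ℝ)) ^ δ := by
        rw [← Real.mul_rpow (by linarith) (by linarith)]
    _ = (n.factorial : ℝ) ^ δ / (n.choose j : ℝ) ^ δ := by
        rw [key, Real.div_rpow (by positivity) hc.le]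
    _ ≤ (n.factorial : ℝ) ^ δ / (n.choose j) := by
        apply div_le_div_of_nonneg_left (by positivity) hc
        calc (n.choose j : ℝ) = (n.choose j : ℝ) ^ (1:ℝ) := (Real.rpow_one _).symm
          _ ≤ (n.choose j : ℝ) ^ δ := Real.rpow_le_rpow_of_exponent_le hc1 hδ

lemma e_mul_le_exp (s : ℝ) : Real.exp 1 * s ≤ Real.exp s := by
  have h := Real.add_one_le_exp (s - 1)
  calc Real.exp 1 * s ≤ Real.exp 1 * Real.exp (s-1) := by
        have := Real.exp_pos 1
        nlinarith
    _ = Real.exp s := by rw [← Real.exp_add]; ring_nf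

lemma scalar_key (C C' : ℝ) (hC : 0 < C) (hC' : C < C') (n : ℕ) :
    ((n : ℝ) + 1) * C ^ n ≤ C' / (Real.exp 1 * C * Real.log (C' / C)) * C' ^ n := by
  have hL : 0 < Real.log (C' / C) := Real.log_pos (by rw [lt_div_iff₀ hC]; linarith)
  have hd : 0 < Real.exp 1 * C * Real.log (C' / C) := by positivity
  rw [div_mul_eq_mul_div, le_div_iff₀ hd]
  have hCe : C' = C * Real.exp (Real.log (C' / C)) := by
    rw [Real.exp_log (div_pos (by linarith) hC)]; field_simp
  have h1 : C' * C' ^ n = C ^ (n+1) * Real.exp (((n:ℝ)+1) * Real.log (C' / C)) := by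
    calc C' * C' ^ n = C' ^ (n+1) := by ring
      _ = (C * Real.exp (Real.log (C' / C))) ^ (n+1) := by rw [← hCe]
      _ = C ^ (n+1) * Real.exp (Real.log (C' / C)) ^ (n+1) := mul_pow _ _ _
      _ = C ^ (n+1) * Real.exp (((n:ℝ)+1) * Real.log (C' / C)) := by
          rw [← Real.exp_nat_mul]
          push_cast; ring_nf
  rw [h1]
  have h2 := e_mul_le_exp (((n:ℝ)+1) * Real.log (C' / C))
  have hCn : (0:ℝ) < C ^ (n+1) := by positivity
  calc ((n : ℝ) + 1) * C ^ n * (Real.exp 1 * C * Real.log (C' / C))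
      = C ^ (n+1) * (Real.exp 1 * (((n:ℝ)+1) * Real.log (C' / C))) := by ring
    _ ≤ C ^ (n+1) * Real.exp (((n:ℝ)+1) * Real.log (C' / C)) := by
        exact mul_le_mul_of_nonneg_left h2 hCn.le

theorem conv_young_equal (k1 k2 : Finset X → ℝ) (C C' δ1 δ2 δ M1 M2 : ℝ)
    (hC : 0 < C) (hC' : C < C')
    (hδ1 : 0 ≤ δ1) (hδ2 : 0 ≤ δ2) (hδ : 1 ≤ δ) (hδ1' : δ1 ≤ δ) (hδ2' : δ2 ≤ δ)
    (h1 : ∀ η : Finset X, |k1 η| ≤ M1 * C ^ η.card * (η.card.factorial : ℝ) ^ δ1)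
    (h2 : ∀ η : Finset X, |k2 η| ≤ M2 * C ^ η.card * (η.card.factorial : ℝ) ^ δ2) :
    ∀ η : Finset X, |conv k1 k2 η| ≤
      (C' / (Real.exp 1 * C * Real.log (C' / C))) * (M1 * M2) * C' ^ η.card
        * (η.card.factorial : ℝ) ^ δ := by
  have hM1 : 0 ≤ M1 := by
    have := (abs_nonneg (k1 ∅)).trans (h1 ∅)
    simpa using this
  have hM2 : 0 ≤ M2 := by
    have := (abs_nonneg (k2 ∅)).trans (h2 ∅)
    simpa using this
  intro η
  set n := η.card with hn
  set K : ℝ := M1 * M2 * C ^ n * (n.factorial : ℝ) ^ δ with hK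
  have hKnn : 0 ≤ K := by positivity
  have step1 : |conv k1 k2 η| ≤ ∑ ξ ∈ η.powerset, K / (n.choose ξ.card) := by
    refine (Finset.abs_sum_le_sum_abs _ _).trans (Finset.sum_le_sum fun ξ hξ => ?_)
    rw [Finset.mem_powerset] at hξ
    have hjn : ξ.card ≤ n := Finset.card_le_card hξ
    have hsd : (η \ ξ).card = n - ξ.card := by rw [Finset.card_sdiff_of_subset hξ]
    rw [abs_mul]
    calc |k1 ξ| * |k2 (η \ ξ)|
        ≤ (M1 * C ^ ξ.card * (ξ.card.factorial : ℝ) ^ δ1)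
          * (M2 * C ^ (η \ ξ).card * ((η \ ξ).card.factorial : ℝ) ^ δ2) :=
          mul_le_mul (h1 ξ) (h2 _) (abs_nonneg _) (by positivity)
      _ = (M1 * M2 * C ^ n) * ((ξ.card.factorial : ℝ) ^ δ1
            * (((n - ξ.card).factorial : ℝ)) ^ δ2) := by
          rw [hsd]
          rw [show M1 * C ^ ξ.card * (ξ.card.factorial : ℝ) ^ δ1 *
            (M2 * C ^ (n - ξ.card) * (((n - ξ.card).factorial : ℝ)) ^ δ2)
            = (M1 * M2 * (C ^ ξ.card * C ^ (n - ξ.card))) * ((ξ.card.factorial : ℝ) ^ δ1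
              * (((n - ξ.card).factorial : ℝ)) ^ δ2) from by ring,
            ← pow_add, Nat.add_sub_cancel' hjn]
      _ ≤ (M1 * M2 * C ^ n) * ((n.factorial : ℝ) ^ δ / (n.choose ξ.card)) :=
          mul_le_mul_of_nonneg_left
            (fact_rpow_key δ1 δ2 δ hδ hδ1' hδ2' ξ.card n hjn) (by positivity)
      _ = K / (n.choose ξ.card) := by rw [hK]; ring
  have step2 : ∑ ξ ∈ η.powerset, K / (n.choose ξ.card) = ((n : ℝ) + 1) * K := by
    rw [Finset.sum_powerset_apply_card (fun m => K / (n.choose m))]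
    have heach : ∀ m ∈ Finset.range (n + 1), n.choose m • (K / (n.choose m)) = K := by
      intro m hm
      rw [Finset.mem_range, Nat.lt_succ_iff] at hm
      have hc : (n.choose m : ℝ) ≠ 0 := by
        exact_mod_cast (Nat.choose_pos hm).ne'
      rw [nsmul_eq_mul, mul_div_cancel₀ _ hc]
    rw [Finset.sum_congr rfl heach, Finset.sum_const, Finset.card_range, nsmul_eq_mul]
    push_cast; ring
  have step3 : ((n : ℝ) + 1) * K ≤
      (C' / (Real.exp 1 * C * Real.log (C' / C))) * (M1 * M2) * C' ^ n
        * (n.factorial : ℝ) ^ δ := by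
    have h := mul_le_mul_of_nonneg_right (scalar_key C C' hC hC' n)
      (show (0:ℝ) ≤ M1 * M2 * (n.factorial : ℝ) ^ δ by positivity)
    calc ((n : ℝ) + 1) * K
        = ((n : ℝ) + 1) * C ^ n * (M1 * M2 * (n.factorial : ℝ) ^ δ) := by rw [hK]; ring
      _ ≤ C' / (Real.exp 1 * C * Real.log (C' / C)) * C' ^ n
          * (M1 * M2 * (n.factorial : ℝ) ^ δ) := h
      _ = (C' / (Real.exp 1 * C * Real.log (C' / C))) * (M1 * M2) * C' ^ n
          * (n.factorial : ℝ) ^ δ := by ring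
  exact step1.trans (step2 ▸ step3)
end

section
/- If |k1(η)| ≤ M_1 C_1^{|η|} (|η|!)^{δ_1} with C_1 > 1, δ_1 ≥ 1, and |k2(η)| ≤ M_2 for all η, then |(k1 * k2)(η)| ≤ (C_1/(C_1 − 1)) · M_1 M_2 · C_1^{|η|} (|η|!)^{δ_1} for all finite configurations η. -/
open Finset

variable {X : Type*} [DecidableEq X]

lemma fact_rpow_split (δ1 : ℝ) (m : ℕ) :
    ((m.factorial : ℝ)) ^ δ1 = (m.factorial : ℝ) * (m.factorial : ℝ) ^ (δ1 - 1) := by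
  have hpos : (0:ℝ) < (m.factorial : ℝ) := by positivity
  rw [show δ1 = 1 + (δ1 - 1) by ring, Real.rpow_add hpos, Real.rpow_one]
  ring_nf

lemma aux_choose_fact (δ1 : ℝ) (hδ : 1 ≤ δ1) (n j : ℕ) (hj : j ≤ n) :
    (n.choose j : ℝ) * (j.factorial : ℝ) ^ δ1 ≤ (n.factorial : ℝ) ^ δ1 := by
  have h1 : (n.choose j * j.factorial : ℕ) ≤ n.factorial := by
    calc n.choose j * j.factorial
        ≤ n.choose j * j.factorial * (n - j).factorial :=
          Nat.le_mul_of_pos_right _ (Nat.factorial_pos _)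
      _ = n.factorial := Nat.choose_mul_factorial_mul_factorial hj
  have h1' : ((n.choose j : ℝ) * (j.factorial : ℝ)) ≤ (n.factorial : ℝ) := by
    exact_mod_cast h1
  have h2 : ((j.factorial : ℝ)) ^ (δ1 - 1) ≤ ((n.factorial : ℝ)) ^ (δ1 - 1) :=
    Real.rpow_le_rpow (by positivity) (by exact_mod_cast Nat.factorial_le hj) (by linarith)
  calc (n.choose j : ℝ) * (j.factorial : ℝ) ^ δ1
      = ((n.choose j : ℝ) * (j.factorial : ℝ)) * (j.factorial : ℝ) ^ (δ1 - 1) := by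
        rw [fact_rpow_split]; ring
    _ ≤ (n.factorial : ℝ) * (n.factorial : ℝ) ^ (δ1 - 1) := by
        apply mul_le_mul h1' h2 (by positivity) (by positivity)
    _ = (n.factorial : ℝ) ^ δ1 := (fact_rpow_split δ1 n).symm

theorem conv_young_bounded (k1 k2 : Finset X → ℝ) (C1 δ1 M1 M2 : ℝ)
    (hC1 : 1 < C1) (hδ1 : 1 ≤ δ1)
    (h1 : ∀ η : Finset X, |k1 η| ≤ M1 * C1 ^ η.card * (η.card.factorial : ℝ) ^ δ1)
    (h2 : ∀ η : Finset X, |k2 η| ≤ M2) :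
    ∀ η : Finset X, |conv k1 k2 η| ≤
      (C1 / (C1 - 1)) * (M1 * M2) * C1 ^ η.card * (η.card.factorial : ℝ) ^ δ1 := by
  have hM2 : 0 ≤ M2 := (abs_nonneg _).trans (h2 ∅)
  have hC1' : (0:ℝ) < C1 - 1 := by linarith
  have hC1pos : (0:ℝ) < C1 := by linarith
  intro η
  set n := η.card with hn
  have key : ∑ ξ ∈ η.powerset, C1 ^ ξ.card * (ξ.card.factorial : ℝ) ^ δ1
      ≤ (C1 / (C1 - 1)) * C1 ^ n * (n.factorial : ℝ) ^ δ1 := by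
    rw [Finset.powerset_card_disjiUnion]
    refine (Finset.sum_disjiUnion _ _ _).trans_le ?_
    have step : ∀ j ∈ Finset.range (n + 1),
        (∑ ξ ∈ Finset.powersetCard j η, C1 ^ ξ.card * (ξ.card.factorial : ℝ) ^ δ1)
          ≤ C1 ^ j * (n.factorial : ℝ) ^ δ1 := by
      intro j hj
      have hjn : j ≤ n := Nat.lt_succ_iff.mp (Finset.mem_range.mp hj)
      have : ∀ ξ ∈ Finset.powersetCard j η,
          C1 ^ ξ.card * (ξ.card.factorial : ℝ) ^ δ1
            = C1 ^ j * (j.factorial : ℝ) ^ δ1 := by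
        intro ξ hξ
        rw [(Finset.mem_powersetCard.mp hξ).2]
      rw [Finset.sum_congr rfl this, Finset.sum_const, Finset.card_powersetCard,
        nsmul_eq_mul]
      calc (η.card.choose j : ℝ) * (C1 ^ j * (j.factorial : ℝ) ^ δ1)
          = C1 ^ j * ((n.choose j : ℝ) * (j.factorial : ℝ) ^ δ1) := by rw [← hn]; ring
        _ ≤ C1 ^ j * ((n.factorial : ℝ) ^ δ1) := by
            apply mul_le_mul_of_nonneg_left (aux_choose_fact δ1 hδ1 n j hjn) (by positivity)
    calc ∑ j ∈ Finset.range (η.card + 1),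
          ∑ ξ ∈ Finset.powersetCard j η, C1 ^ ξ.card * (ξ.card.factorial : ℝ) ^ δ1
        ≤ ∑ j ∈ Finset.range (n + 1), C1 ^ j * (n.factorial : ℝ) ^ δ1 := by
          exact Finset.sum_le_sum step
      _ = (∑ j ∈ Finset.range (n + 1), C1 ^ j) * (n.factorial : ℝ) ^ δ1 := by
          rw [Finset.sum_mul]
      _ ≤ (C1 / (C1 - 1) * C1 ^ n) * (n.factorial : ℝ) ^ δ1 := by
          apply mul_le_mul_of_nonneg_right _ (by positivity)
          rw [geom_sum_eq (ne_of_gt hC1)]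
          rw [div_le_iff₀ hC1']
          have heq : C1 / (C1 - 1) * C1 ^ n * (C1 - 1) = C1 * C1 ^ n := by
            field_simp
          have hp : C1 ^ (n + 1) = C1 * C1 ^ n := by ring
          rw [heq, hp]
          linarith
      _ = C1 / (C1 - 1) * C1 ^ n * (n.factorial : ℝ) ^ δ1 := by ring
  calc |conv k1 k2 η|
      ≤ ∑ ξ ∈ η.powerset, |k1 ξ| * |k2 (η \ ξ)| := by
        rw [conv]
        refine (Finset.abs_sum_le_sum_abs _ _).trans (le_of_eq ?_)
        exact Finset.sum_congr rfl fun ξ _ => abs_mul _ _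
    _ ≤ ∑ ξ ∈ η.powerset, M1 * C1 ^ ξ.card * (ξ.card.factorial : ℝ) ^ δ1 * M2 := by
        refine Finset.sum_le_sum fun ξ _ => ?_
        exact mul_le_mul (h1 ξ) (h2 _) (abs_nonneg _) ((abs_nonneg _).trans (h1 ξ))
    _ = (M1 * M2) * ∑ ξ ∈ η.powerset, C1 ^ ξ.card * (ξ.card.factorial : ℝ) ^ δ1 := by
        rw [Finset.mul_sum]
        exact Finset.sum_congr rfl fun ξ _ => by ring
    _ ≤ (M1 * M2) * ((C1 / (C1 - 1)) * C1 ^ n * (n.factorial : ℝ) ^ δ1) := by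
        apply mul_le_mul_of_nonneg_left key
        have hM1 : 0 ≤ M1 * C1 ^ (0:ℕ) * ((0:ℕ).factorial : ℝ) ^ δ1 :=
          (abs_nonneg _).trans (by simpa using h1 ∅)
        simp only [pow_zero, mul_one, Nat.factorial_zero, Nat.cast_one, Real.one_rpow] at hM1
        exact mul_nonneg hM1 hM2
    _ = (C1 / (C1 - 1)) * (M1 * M2) * C1 ^ n * (n.factorial : ℝ) ^ δ1 := by ring
end

section
/- For a function k on finite configurations with |k(η)| ≤ M C^{|η|} (|η|!)^δ where δ ∈ [0,1), the n-fold Ruelle convolution power satisfies |k^{*n}(η)| ≤ M^n (nC)^{|η|} (|η|!)^δ for all n ∈ ℕ and all finite configurations η. -/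
open Finset

variable {X : Type*} [DecidableEq X]

lemma sum_pow_card (η : Finset X) (a b : ℝ) :
    ∑ ξ ∈ η.powerset, a ^ ξ.card * b ^ (η.card - ξ.card) = (a + b) ^ η.card := by
  rw [Finset.powerset_card_disjiUnion]
  erw [Finset.sum_disjiUnion]
  rw [add_pow]
  refine Finset.sum_congr rfl fun j hj => ?_
  rw [Finset.sum_congr rfl (fun t ht => by
    rw [(Finset.mem_powersetCard.1 ht).2]), Finset.sum_const, Finset.card_powersetCard,
    nsmul_eq_mul]
  ring

theorem convPow_bound (k : Finset X → ℝ) (C δ M : ℝ)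
    (hC : 0 < C) (hδ0 : 0 ≤ δ) (hδ1 : δ < 1)
    (h : ∀ η : Finset X, |k η| ≤ M * C ^ η.card * (η.card.factorial : ℝ) ^ δ) :
    ∀ (n : ℕ) (η : Finset X),
      |convPow k n η| ≤ M ^ n * ((n : ℝ) * C) ^ η.card * (η.card.factorial : ℝ) ^ δ := by
  have hM : 0 ≤ M := by
    have := h ∅
    simp [Real.one_rpow] at this
    exact le_trans (abs_nonneg _) this
  intro n
  induction n with
  | zero =>
    intro η
    by_cases hη : η = ∅
    · simp [hη, convPow, oneStar, Real.one_rpow]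
    · have : 0 < η.card := Finset.card_pos.2 (Finset.nonempty_iff_ne_empty.2 hη)
      simp [convPow, oneStar, hη, zero_pow this.ne']
  | succ n ih =>
    intro η
    have hfac : ∀ ξ ∈ η.powerset,
        ((ξ.card.factorial : ℝ)) ^ δ * (((η \ ξ).card.factorial : ℝ)) ^ δ
          ≤ ((η.card.factorial : ℝ)) ^ δ := by
      intro ξ hξ
      have hsub : ξ ⊆ η := Finset.mem_powerset.1 hξ
      rw [← Real.mul_rpow (by positivity) (by positivity)]
      refine Real.rpow_le_rpow (by positivity) ?_ hδ0
      have hdvd : ξ.card.factorial * (η \ ξ).card.factorial ∣ η.card.factorial := by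
        rw [Finset.card_sdiff_of_subset hsub]
        exact Nat.factorial_mul_factorial_dvd_factorial (Finset.card_le_card hsub)
      exact_mod_cast Nat.le_of_dvd (Nat.factorial_pos _) hdvd
    calc |convPow k (n+1) η|
        ≤ ∑ ξ ∈ η.powerset, |k ξ| * |convPow k n (η \ ξ)| := by
          show |conv k (convPow k n) η| ≤ _
          rw [conv]
          refine le_trans (Finset.abs_sum_le_sum_abs _ _) ?_
          simp [abs_mul]
      _ ≤ ∑ ξ ∈ η.powerset,
            (M * C ^ ξ.card * (ξ.card.factorial : ℝ) ^ δ) *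
            (M ^ n * ((n : ℝ) * C) ^ (η \ ξ).card * ((η \ ξ).card.factorial : ℝ) ^ δ) := by
          refine Finset.sum_le_sum fun ξ hξ => ?_
          exact mul_le_mul (h ξ) (ih (η \ ξ)) (abs_nonneg _) (by positivity)
      _ ≤ ∑ ξ ∈ η.powerset,
            M ^ (n+1) * (η.card.factorial : ℝ) ^ δ *
              (C ^ ξ.card * ((n : ℝ) * C) ^ (η.card - ξ.card)) := by
          refine Finset.sum_le_sum fun ξ hξ => ?_
          have hsub : ξ ⊆ η := Finset.mem_powerset.1 hξ
          rw [Finset.card_sdiff_of_subset hsub]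
          have h1 := hfac ξ hξ
          rw [Finset.card_sdiff_of_subset hsub] at h1
          have hnn : (0:ℝ) ≤ M ^ (n+1) * (C ^ ξ.card * ((n:ℝ)*C) ^ (η.card - ξ.card)) := by
            positivity
          calc (M * C ^ ξ.card * (ξ.card.factorial : ℝ) ^ δ) *
                (M ^ n * ((n : ℝ) * C) ^ (η.card - ξ.card) * ((η.card - ξ.card).factorial : ℝ) ^ δ)
              = (M ^ (n+1) * (C ^ ξ.card * ((n:ℝ)*C) ^ (η.card - ξ.card))) *
                  ((ξ.card.factorial : ℝ) ^ δ * (((η.card - ξ.card).factorial : ℝ)) ^ δ) := by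
                ring
            _ ≤ (M ^ (n+1) * (C ^ ξ.card * ((n:ℝ)*C) ^ (η.card - ξ.card))) *
                  ((η.card.factorial : ℝ)) ^ δ := by
                exact mul_le_mul_of_nonneg_left h1 hnn
            _ = _ := by ring
      _ = M ^ (n+1) * (η.card.factorial : ℝ) ^ δ * (C + (n:ℝ)*C) ^ η.card := by
          rw [← Finset.mul_sum, sum_pow_card]
      _ = M ^ (n+1) * (((n:ℕ)+1 : ℝ) * C) ^ η.card * (η.card.factorial : ℝ) ^ δ := by
          ring_nf
      _ = _ := by norm_num
end

section
/- For functions k1, k2 on finite configurations with k1(∅) = k2(∅) = 1, one has ln^*(k1 * k2) = ln^* k1 + ln^* k2, where ln^* k := Σ_{n≥1} ((−1)^{n−1}/n)(k − 1^*)^{*n}. -/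
open Finset

variable {X : Type*} [DecidableEq X]

lemma conv_one_left (g : Finset X → ℝ) : conv oneStar g = g := by
  funext ξ
  unfold conv oneStar
  rw [Finset.sum_eq_single ∅]
  · simp
  · intro b _ hne; simp [hne]
  · intro h; exact absurd (Finset.empty_mem_powerset ξ) h

lemma conv_comm (f g : Finset X → ℝ) : conv f g = conv g f := by
  funext ξ
  unfold conv
  refine Finset.sum_nbij' (fun ζ => ξ \ ζ) (fun ζ => ξ \ ζ) ?_ ?_ ?_ ?_ ?_ <;>
    intro a ha <;> simp only [Finset.mem_powerset] at *
  · exact sdiff_subset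
  · exact sdiff_subset
  · exact Finset.sdiff_sdiff_eq_self ha
  · exact Finset.sdiff_sdiff_eq_self ha
  · rw [Finset.sdiff_sdiff_eq_self ha, mul_comm]

lemma conv_assoc (f g h : Finset X → ℝ) : conv (conv f g) h = conv f (conv g h) := by
  funext ξ
  unfold conv
  simp only [Finset.sum_mul, Finset.mul_sum]
  rw [Finset.sum_sigma', Finset.sum_sigma']
  refine Finset.sum_nbij' (fun p => ⟨p.2, p.1 \ p.2⟩) (fun p => ⟨p.1 ∪ p.2, p.1⟩) ?_ ?_ ?_ ?_ ?_
  · rintro ⟨ζ, σ⟩ hp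
    simp only [Finset.mem_sigma, Finset.mem_powerset] at *
    exact ⟨hp.2.trans hp.1, Finset.sdiff_subset_sdiff hp.1 le_rfl⟩
  · rintro ⟨σ, τ⟩ hp
    simp only [Finset.mem_sigma, Finset.mem_powerset] at *
    obtain ⟨h1, h2⟩ := hp
    exact ⟨Finset.union_subset h1 (h2.trans sdiff_subset), Finset.subset_union_left⟩
  · rintro ⟨ζ, σ⟩ hp
    simp only [Finset.mem_sigma, Finset.mem_powerset] at hp
    simp [Finset.union_sdiff_of_subset hp.2]
  · rintro ⟨σ, τ⟩ hp
    simp only [Finset.mem_sigma, Finset.mem_powerset] at hp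
    have hd : Disjoint σ τ := Finset.disjoint_of_subset_right hp.2 Finset.sdiff_disjoint.symm
    simp [Finset.union_sdiff_cancel_left hd]
  · rintro ⟨ζ, σ⟩ hp
    simp only [Finset.mem_sigma, Finset.mem_powerset] at hp
    have : ξ \ ζ = (ξ \ σ) \ (ζ \ σ) := by
      ext a
      simp only [Finset.mem_sdiff]
      constructor
      · rintro ⟨ha, hb⟩; exact ⟨⟨ha, fun hc => hb (hp.2 hc)⟩, fun hc => hb hc.1⟩
      · rintro ⟨⟨ha, hb⟩, hc⟩
        refine ⟨ha, fun hz => ?_⟩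
        by_cases hs : a ∈ σ
        · exact hb hs
        · exact hc ⟨hz, hs⟩
    rw [this, mul_assoc]

structure RC (X : Type*) [DecidableEq X] where
  toFun : Finset X → ℝ

namespace RC

@[ext] lemma ext {a b : RC X} (h : a.toFun = b.toFun) : a = b := by
  cases a; cases b; simpa using h

noncomputable instance : Add (RC X) := ⟨fun a b => ⟨a.toFun + b.toFun⟩⟩
noncomputable instance : Neg (RC X) := ⟨fun a => ⟨-a.toFun⟩⟩
noncomputable instance : Zero (RC X) := ⟨⟨0⟩⟩
noncomputable instance : Mul (RC X) := ⟨fun a b => ⟨conv a.toFun b.toFun⟩⟩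
noncomputable instance : One (RC X) := ⟨⟨oneStar⟩⟩

private lemma add_toFun' (a b : RC X) : (a + b).toFun = a.toFun + b.toFun := rfl

noncomputable instance : AddCommGroup (RC X) where
  add_assoc a b c := by ext1; simp [add_toFun', add_assoc]
  zero_add a := by ext1; simp [add_toFun']; rfl
  add_zero a := by ext1; simp [add_toFun']; rfl
  add_comm a b := by ext1; simp [add_toFun', add_comm]
  neg_add_cancel a := by ext1; show (-a).toFun + a.toFun = 0; show -a.toFun + a.toFun = 0; simp
  nsmul := nsmulRec
  zsmul := zsmulRec

lemma conv_add (f g h : Finset X → ℝ) :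
    conv f (g + h) = conv f g + conv f h := by
  funext ξ
  simp [conv, Finset.sum_add_distrib, mul_add]

noncomputable instance : CommRing (RC X) where
  __ := (inferInstance : AddCommGroup (RC X))
  left_distrib a b c := by ext1; show conv _ (_ + _) = conv _ _ + conv _ _; rw [conv_add]
  right_distrib a b c := by
    ext1
    show conv (_ + _) _ = conv _ _ + conv _ _
    rw [conv_comm, conv_add, conv_comm c.toFun, conv_comm c.toFun]
  zero_mul a := by ext1; show conv 0 _ = 0; funext ξ; simp [conv]
  mul_zero a := by ext1; show conv _ 0 = 0; funext ξ; simp [conv]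
  mul_assoc a b c := by ext1; exact conv_assoc _ _ _
  one_mul a := by ext1; exact conv_one_left _
  mul_one a := by ext1; show conv _ oneStar = _; rw [conv_comm, conv_one_left]
  mul_comm a b := by ext1; exact conv_comm _ _

@[simp] lemma add_toFun (a b : RC X) : (a + b).toFun = a.toFun + b.toFun := rfl
@[simp] lemma neg_toFun (a : RC X) : (-a).toFun = -a.toFun := rfl
@[simp] lemma zero_toFun : (0 : RC X).toFun = 0 := rfl
@[simp] lemma mul_toFun (a b : RC X) : (a * b).toFun = conv a.toFun b.toFun := rfl
@[simp] lemma one_toFun : (1 : RC X).toFun = oneStar := rfl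
@[simp] lemma sub_toFun (a b : RC X) : (a - b).toFun = a.toFun - b.toFun := by
  rw [sub_eq_add_neg, add_toFun, neg_toFun, sub_eq_add_neg]

lemma pow_toFun (a : RC X) (n : ℕ) : (a ^ n).toFun = convPow a.toFun n := by
  induction n with
  | zero => rw [pow_zero]; rfl
  | succ n ih => rw [pow_succ, mul_comm, mul_toFun, ih]; rfl

/-- toFun as additive hom, for map_sum. -/
noncomputable def toFunHom : RC X →+ (Finset X → ℝ) :=
  { toFun := RC.toFun, map_zero' := rfl, map_add' := fun _ _ => rfl }

lemma sum_toFun {ι : Type*} (s : Finset ι) (f : ι → RC X) (ξ : Finset X) :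
    (∑ i ∈ s, f i).toFun ξ = ∑ i ∈ s, (f i).toFun ξ := by
  have := map_sum (toFunHom (X := X)) f s
  calc (∑ i ∈ s, f i).toFun ξ = toFunHom (∑ i ∈ s, f i) ξ := rfl
    _ = (∑ i ∈ s, toFunHom (f i)) ξ := by rw [this]
    _ = ∑ i ∈ s, (f i).toFun ξ := by simp [toFunHom]

lemma nsmul_toFun (n : ℕ) (a : RC X) : (n • a).toFun = n • a.toFun := by
  induction n with
  | zero => simp
  | succ n ih => rw [succ_nsmul, succ_nsmul, add_toFun, ih]

instance : NoZeroSMulDivisors ℕ (RC X) := by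
  constructor
  intro n a h
  rcases eq_or_ne n 0 with hn | hn
  · exact Or.inl hn
  · refine Or.inr ?_
    ext1
    have := congrArg toFun h
    rw [nsmul_toFun, zero_toFun] at this
    funext ξ
    have h2 := congrFun this ξ
    simp only [Pi.smul_apply, Pi.zero_apply, smul_eq_zero] at h2
    exact h2.resolve_left hn

instance : IsAddTorsionFree (RC X) := ⟨fun n hn a b h => by
  have h' : n • (a - b) = 0 := by simp only at h; rw [smul_sub, h, sub_self]
  exact sub_eq_zero.mp ((smul_eq_zero.mp h').resolve_left hn)⟩

/-- constants -/
noncomputable def cst (c : ℝ) : RC X := ⟨fun ξ => if ξ = ∅ then c else 0⟩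

@[simp] lemma cst_toFun (c : ℝ) (ξ : Finset X) :
    (cst c : RC X).toFun ξ = if ξ = ∅ then c else 0 := rfl

lemma cst_mul_apply (c : ℝ) (g : RC X) (ξ : Finset X) :
    (cst c * g).toFun ξ = c * g.toFun ξ := by
  show conv _ _ ξ = _
  unfold conv
  rw [Finset.sum_eq_single ∅]
  · simp
  · intro b _ hne; simp [hne]
  · intro h; exact absurd (Finset.empty_mem_powerset ξ) h

@[simp] lemma cst_one : (cst 1 : RC X) = 1 := by
  ext1; funext ξ; simp [oneStar]

@[simp] lemma cst_zero : (cst 0 : RC X) = 0 := by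
  ext1; funext ξ; simp

lemma cst_mul (a b : ℝ) : (cst a : RC X) * cst b = cst (a * b) := by
  ext1; funext ξ
  rw [cst_mul_apply]
  simp [mul_ite]

lemma cst_add (a b : ℝ) : (cst a : RC X) + cst b = cst (a + b) := by
  ext1; funext ξ; by_cases h : ξ = ∅ <;> simp [h]

lemma cst_neg (a : ℝ) : (cst (-a) : RC X) = - cst a := by
  ext1; funext ξ; by_cases h : ξ = ∅ <;> simp [h]

lemma natCast_eq (n : ℕ) : (n : RC X) = cst (n : ℝ) := by
  induction n with
  | zero => rw [Nat.cast_zero, Nat.cast_zero, cst_zero]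
  | succ n ih => rw [Nat.cast_succ, ih, Nat.cast_succ, ← cst_add, cst_one]

end RC

namespace RC
open Polynomial

variable (u v : RC X)

/-- truncated logarithm series -/
noncomputable def LB (a : RC X) (B : ℕ) : RC X :=
  ∑ n ∈ Finset.Icc 1 B, cst ((-1 : ℝ) ^ (n - 1) / n) * a ^ n

/-- polynomial version -/
noncomputable def LP (p : Polynomial (RC X)) (B : ℕ) : Polynomial (RC X) :=
  ∑ n ∈ Finset.Icc 1 B, Polynomial.C (cst ((-1 : ℝ) ^ (n - 1) / n)) * p ^ n

lemma cst_pow (a : ℝ) (n : ℕ) : (cst (a ^ n) : RC X) = (cst a) ^ n := by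
  induction n with
  | zero => rw [pow_zero, pow_zero, cst_one]
  | succ n ih => rw [pow_succ, pow_succ, ← ih, cst_mul]

lemma derivative_LP (p : Polynomial (RC X)) (B : ℕ) :
    Polynomial.derivative (LP p B)
      = (∑ m ∈ Finset.range B, (-p) ^ m) * Polynomial.derivative p := by
  unfold LP
  rw [map_sum, Finset.sum_mul]
  rw [← Finset.Ico_add_one_right_eq_Icc, Finset.sum_Ico_eq_sum_range]
  apply Finset.sum_congr rfl
  intro m _
  have hm1 : 1 + m - 1 = m := by omega
  rw [Polynomial.derivative_C_mul, Polynomial.derivative_pow, hm1, natCast_eq]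
  rw [← mul_assoc, ← mul_assoc, ← Polynomial.C_mul, cst_mul]
  have h2 : (-1 : ℝ) ^ m / ((1 + m : ℕ) : ℝ) * ((1 + m : ℕ) : ℝ) = (-1 : ℝ) ^ m := by
    have hne : ((1 + m : ℕ) : ℝ) ≠ 0 := by positivity
    field_simp
  rw [h2]
  have h3 : (Polynomial.C (cst ((-1 : ℝ) ^ m)) : Polynomial (RC X)) = (-1) ^ m := by
    rw [cst_pow]
    have : (cst (-1 : ℝ) : RC X) = -1 := by rw [cst_neg, cst_one]
    rw [this, map_pow, Polynomial.C_neg, Polynomial.C_1]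
  rw [h3, show ((-p) ^ m : Polynomial (RC X)) = (-1) ^ m * p ^ m from neg_pow p m]

lemma geom_inv {p : Polynomial (RC X)} {B : ℕ} (hp : p ^ B = 0) :
    (∑ m ∈ Finset.range B, (-p) ^ m) * (1 + p) = 1 := by
  have h := geom_sum_mul (-p) B
  rw [neg_pow, hp, mul_zero] at h
  linear_combination -h

lemma key (M : ℕ) (hu : u ^ (M + 1) = 0) (hv : v ^ (M + 1) = 0) :
    LB (u + v + u * v) (2 * M + 2) = LB u (2 * M + 2) + LB v (2 * M + 2) := by
  classical
  set B := 2 * M + 2 with hB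
  -- polynomial setup
  set U : Polynomial (RC X) := Polynomial.C u * Polynomial.X with hU
  set V : Polynomial (RC X) := Polynomial.C v * Polynomial.X with hV
  set W : Polynomial (RC X) := U + V + U * V with hW
  have hpow : ∀ (a : RC X) (n : ℕ), a ^ (M+1) = 0 → M + 1 ≤ n →
      (Polynomial.C a * Polynomial.X) ^ n = 0 := by
    intro a n ha hn
    rw [mul_pow, ← map_pow, ← Nat.sub_add_cancel hn, pow_add, ha, mul_zero, map_zero, zero_mul]
  have hUB : U ^ B = 0 := hpow u B hu (by omega)
  have hVB : V ^ B = 0 := hpow v B hv (by omega)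
  have hWB : W ^ B = 0 := by
    have hw : W = U * (1 + V) + V := by rw [hW]; ring
    rw [hw, add_pow]
    apply Finset.sum_eq_zero
    intro i hi
    simp only [Finset.mem_range] at hi
    by_cases hiM : M + 1 ≤ i
    · have : (U * (1 + V)) ^ i = 0 := by
        rw [mul_pow, hpow u i hu hiM, zero_mul]
      rw [this, zero_mul, zero_mul]
    · have hBi : M + 1 ≤ B - i := by omega
      have : V ^ (B - i) = 0 := hpow v (B - i) hv hBi
      rw [this, mul_zero, zero_mul]
  -- inverses
  set SU : Polynomial (RC X) := ∑ m ∈ Finset.range B, (-U) ^ m with hSU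
  set SV : Polynomial (RC X) := ∑ m ∈ Finset.range B, (-V) ^ m with hSV
  set SW : Polynomial (RC X) := ∑ m ∈ Finset.range B, (-W) ^ m with hSW
  have hU1 : SU * (1 + U) = 1 := geom_inv hUB
  have hV1 : SV * (1 + V) = 1 := geom_inv hVB
  have hW1 : SW * (1 + W) = 1 := geom_inv hWB
  have hprod : 1 + W = (1 + U) * (1 + V) := by rw [hW]; ring
  -- derivatives agree
  have hW' : Polynomial.derivative W
      = Polynomial.derivative U * (1 + V) + (1 + U) * Polynomial.derivative V := by
    rw [hW]
    simp only [map_add, Polynomial.derivative_mul]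
    ring
  have hDeq : Polynomial.derivative (LP W B) = Polynomial.derivative (LP U B + LP V B) := by
    rw [map_add, derivative_LP, derivative_LP, derivative_LP]
    have e1 : (1 + W) * (SW * Polynomial.derivative W)
        = Polynomial.derivative U * (1 + V) + (1 + U) * Polynomial.derivative V := by
      calc (1 + W) * (SW * Polynomial.derivative W)
          = (SW * (1 + W)) * Polynomial.derivative W := by ring
        _ = Polynomial.derivative W := by rw [hW1, one_mul]
        _ = _ := hW'
    have e2 : (1 + W) * (SU * Polynomial.derivative U + SV * Polynomial.derivative V)
        = Polynomial.derivative U * (1 + V) + (1 + U) * Polynomial.derivative V := by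
      rw [hprod]
      calc (1 + U) * (1 + V) * (SU * Polynomial.derivative U + SV * Polynomial.derivative V)
          = (SU * (1 + U)) * ((1 + V) * Polynomial.derivative U)
            + (SV * (1 + V)) * ((1 + U) * Polynomial.derivative V) := by ring
        _ = _ := by rw [hU1, hV1, one_mul, one_mul]; ring
    have e3 : (1 + W) * (SW * Polynomial.derivative W)
        = (1 + W) * (SU * Polynomial.derivative U + SV * Polynomial.derivative V) := by
      rw [e1, e2]
    calc SW * Polynomial.derivative W
        = (SW * (1 + W)) * (SW * Polynomial.derivative W) := by rw [hW1, one_mul]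
      _ = SW * ((1 + W) * (SW * Polynomial.derivative W)) := by ring
      _ = SW * ((1 + W) * (SU * Polynomial.derivative U + SV * Polynomial.derivative V)) := by
          rw [e3]
      _ = (SW * (1 + W)) * (SU * Polynomial.derivative U + SV * Polynomial.derivative V) := by
          ring
      _ = SU * Polynomial.derivative U + SV * Polynomial.derivative V := by rw [hW1, one_mul]
  -- constant coefficients
  have hc0 : ∀ p : Polynomial (RC X), Polynomial.constantCoeff p = 0 →
      Polynomial.constantCoeff (LP p B) = 0 := by
    intro p hp
    unfold LP
    rw [map_sum]
    apply Finset.sum_eq_zero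
    intro n hn
    simp only [Finset.mem_Icc] at hn
    rw [map_mul, map_pow, hp, zero_pow (by omega), mul_zero]
  have hcU : Polynomial.constantCoeff U = 0 := by
    rw [hU]; simp
  have hcV : Polynomial.constantCoeff V = 0 := by
    rw [hV]; simp
  have hcW : Polynomial.constantCoeff W = 0 := by
    have hm : Polynomial.constantCoeff (U * V) = 0 := by rw [map_mul, hcU, zero_mul]
    rw [hW, map_add, map_add, hcU, hcV, hm]; norm_num
  -- conclude polynomial identity
  have hCeq : Polynomial.constantCoeff (LP W B) = Polynomial.constantCoeff (LP U B + LP V B) := by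
    rw [map_add, hc0 W hcW, hc0 U hcU, hc0 V hcV, add_zero]
  have hpoly : LP W B = LP U B + LP V B := by
    have hd : Polynomial.derivative (LP W B - (LP U B + LP V B)) = 0 := by
      rw [map_sub, hDeq, sub_self]
    have := Polynomial.eq_C_of_derivative_eq_zero hd
    have hcoeff : (LP W B - (LP U B + LP V B)).coeff 0 = 0 := by
      rw [Polynomial.coeff_sub]
      have : ∀ q : Polynomial (RC X), q.coeff 0 = Polynomial.constantCoeff q := fun _ => rfl
      rw [this, this, hCeq, sub_self]
    rw [hcoeff, map_zero] at this
    linear_combination this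
  -- evaluate at 1
  have heval : ∀ p : Polynomial (RC X), Polynomial.eval 1 (LP p B) = LB (Polynomial.eval 1 p) B := by
    intro p
    unfold LP LB
    rw [Polynomial.eval_finset_sum]
    apply Finset.sum_congr rfl
    intro n _
    rw [Polynomial.eval_mul, Polynomial.eval_pow, Polynomial.eval_C]
  have h1 := congrArg (Polynomial.eval 1) hpoly
  rw [Polynomial.eval_add, heval, heval, heval] at h1
  have hu1 : Polynomial.eval 1 U = u := by rw [hU]; simp
  have hv1 : Polynomial.eval 1 V = v := by rw [hV]; simp
  have hw1 : Polynomial.eval 1 W = u + v + u * v := by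
    rw [hW]; simp [hu1, hv1]
  rw [hu1, hv1, hw1] at h1
  exact h1

end RC

section Pointwise
variable {X : Type*} [DecidableEq X]

lemma convPow_card_lt (u : Finset X → ℝ) (hu : u ∅ = 0) :
    ∀ n ξ, ξ.card < n → convPow u n ξ = 0 := by
  intro n
  induction n with
  | zero => intro ξ h; omega
  | succ n ih =>
      intro ξ h
      show conv u (convPow u n) ξ = 0
      apply Finset.sum_eq_zero
      intro ζ hζ
      rw [Finset.mem_powerset] at hζ
      rcases eq_or_ne ζ ∅ with hz | hz
      · rw [hz, hu, zero_mul]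
      · have hcard : (ξ \ ζ).card < n := by
          have h1 : (ξ \ ζ).card = ξ.card - ζ.card := Finset.card_sdiff_of_subset hζ
          have h2 : 0 < ζ.card := Finset.card_pos.mpr (Finset.nonempty_iff_ne_empty.mpr hz)
          have h3 : ζ.card ≤ ξ.card := Finset.card_le_card hζ
          omega
        rw [ih _ hcard, mul_zero]

lemma convPow_not_subset (η : Finset X) (u : Finset X → ℝ)
    (hsupp : ∀ ξ, ¬ ξ ⊆ η → u ξ = 0) :
    ∀ n ξ, ¬ ξ ⊆ η → convPow u n ξ = 0 := by
  intro n
  induction n with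
  | zero =>
      intro ξ h
      show oneStar ξ = 0
      have : ξ ≠ ∅ := by rintro rfl; exact h (Finset.empty_subset η)
      simp [oneStar, this]
  | succ n ih =>
      intro ξ h
      show conv u (convPow u n) ξ = 0
      apply Finset.sum_eq_zero
      intro ζ hζ
      rw [Finset.mem_powerset] at hζ
      by_cases hz : ζ ⊆ η
      · have hnd : ¬ (ξ \ ζ ⊆ η) := by
          intro hd
          exact h (by
            intro a ha
            by_cases haζ : a ∈ ζ
            · exact hz haζ
            · exact hd (Finset.mem_sdiff.mpr ⟨ha, haζ⟩))
        rw [ih _ hnd, mul_zero]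
      · rw [hsupp _ hz, zero_mul]

lemma convPow_congr (η : Finset X) (u u' : Finset X → ℝ)
    (h : ∀ ξ ⊆ η, u ξ = u' ξ) :
    ∀ n, ∀ ξ ⊆ η, convPow u n ξ = convPow u' n ξ := by
  intro n
  induction n with
  | zero => intro ξ _; rfl
  | succ n ih =>
      intro ξ hξ
      show conv u (convPow u n) ξ = conv u' (convPow u' n) ξ
      apply Finset.sum_congr rfl
      intro ζ hζ
      rw [Finset.mem_powerset] at hζ
      rw [h ζ (hζ.trans hξ), ih (ξ \ ζ) ((Finset.sdiff_subset).trans hξ)]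

end Pointwise

namespace RC

/-- restriction to subsets of η -/
noncomputable def restr (η : Finset X) (k : Finset X → ℝ) : RC X :=
  ⟨fun ξ => if ξ ⊆ η then k ξ else 0⟩

lemma restr_mul (η : Finset X) (k1 k2 : Finset X → ℝ) :
    restr η (conv k1 k2) = restr η k1 * restr η k2 := by
  ext1; funext ξ
  show (if ξ ⊆ η then conv k1 k2 ξ else 0) = conv _ _ ξ
  by_cases h : ξ ⊆ η
  · rw [if_pos h]
    apply Finset.sum_congr rfl
    intro ζ hζ
    rw [Finset.mem_powerset] at hζ
    show k1 ζ * k2 (ξ \ ζ) = (if ζ ⊆ η then k1 ζ else 0) * (if ξ \ ζ ⊆ η then k2 (ξ \ ζ) else 0)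
    rw [if_pos (hζ.trans h), if_pos ((Finset.sdiff_subset).trans h)]
  · rw [if_neg h]
    symm
    apply Finset.sum_eq_zero
    intro ζ hζ
    rw [Finset.mem_powerset] at hζ
    show (if ζ ⊆ η then k1 ζ else 0) * (if ξ \ ζ ⊆ η then k2 (ξ \ ζ) else 0) = 0
    by_cases hz : ζ ⊆ η
    · have : ¬ (ξ \ ζ ⊆ η) := by
        intro hd
        exact h (by
          intro a ha
          by_cases haζ : a ∈ ζ
          · exact hz haζ
          · exact hd (Finset.mem_sdiff.mpr ⟨ha, haζ⟩))
      rw [if_neg this, mul_zero]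
    · rw [if_neg hz, zero_mul]

/-- u := restr η k - 1 is nilpotent of order ≤ |η| + 1 when k ∅ = 1 -/
lemma restr_sub_one_nilpotent (η : Finset X) (k : Finset X → ℝ) (hk : k ∅ = 1) :
    (restr η k - 1) ^ (η.card + 1) = 0 := by
  set a : RC X := restr η k - 1 with ha
  have h0 : a.toFun ∅ = 0 := by
    rw [ha, sub_toFun]
    rw [Pi.sub_apply, one_toFun]
    show (if (∅ : Finset X) ⊆ η then k ∅ else 0) - oneStar ∅ = 0
    rw [if_pos (Finset.empty_subset η), hk]
    simp [oneStar]
  have hsupp : ∀ ξ, ¬ ξ ⊆ η → a.toFun ξ = 0 := by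
    intro ξ hξ
    rw [ha, sub_toFun]
    rw [Pi.sub_apply, one_toFun]
    show (if ξ ⊆ η then k ξ else 0) - oneStar ξ = 0
    have hne : ξ ≠ ∅ := by rintro rfl; exact hξ (Finset.empty_subset η)
    rw [if_neg hξ]
    simp [oneStar, hne]
  ext1; funext ξ
  rw [pow_toFun]
  by_cases h : ξ ⊆ η
  · exact convPow_card_lt a.toFun h0 _ ξ (by
      have := Finset.card_le_card h; omega)
  · exact convPow_not_subset η a.toFun hsupp _ ξ h

/-- main transfer lemma -/
lemma lnStar_eq (k : Finset X → ℝ) (η : Finset X) (a : RC X)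
    (ha : ∀ ξ, ξ ⊆ η → a.toFun ξ = k ξ - oneStar ξ)
    (h0 : a.toFun ∅ = 0) (B : ℕ) (hB : η.card ≤ B) :
    lnStar k η = (LB a B).toFun η := by
  unfold LB lnStar
  rw [sum_toFun]
  rw [← Finset.sum_subset (Finset.Icc_subset_Icc_right hB)]
  · apply Finset.sum_congr rfl
    intro n hn
    rw [cst_mul_apply, pow_toFun]
    congr 1
    exact (convPow_congr η a.toFun (fun ξ => k ξ - oneStar ξ) ha n η le_rfl).symm
  · intro n hn hn'
    simp only [Finset.mem_Icc] at hn hn'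
    have hcard : η.card < n := by omega
    rw [cst_mul_apply, pow_toFun, convPow_card_lt a.toFun h0 n η hcard, mul_zero]

end RC

theorem lnStar_conv (k1 k2 : Finset X → ℝ) (h1 : k1 ∅ = 1) (h2 : k2 ∅ = 1) :
    lnStar (conv k1 k2) = lnStar k1 + lnStar k2 := by
  funext η
  set N := η.card with hN
  set u : RC X := RC.restr η k1 - 1 with hu
  set v : RC X := RC.restr η k2 - 1 with hv
  have hunil : u ^ (N + 1) = 0 := RC.restr_sub_one_nilpotent η k1 h1
  have hvnil : v ^ (N + 1) = 0 := RC.restr_sub_one_nilpotent η k2 h2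
  have hkey := RC.key u v N hunil hvnil
  set B := 2 * N + 2 with hB
  -- identify u + v + u*v with restr η (conv k1 k2) - 1
  have hw : u + v + u * v = RC.restr η (conv k1 k2) - 1 := by
    rw [RC.restr_mul]
    rw [hu, hv]
    ring
  rw [hw] at hkey
  -- pointwise facts
  have hrestr_toFun : ∀ (k : Finset X → ℝ), k ∅ = 1 →
      (∀ ξ, ξ ⊆ η → (RC.restr η k - 1).toFun ξ = k ξ - oneStar ξ)
      ∧ (RC.restr η k - 1).toFun ∅ = 0 := by
    intro k hk
    constructor
    · intro ξ hξ
      rw [RC.sub_toFun, Pi.sub_apply, RC.one_toFun]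
      show (if ξ ⊆ η then k ξ else 0) - oneStar ξ = k ξ - oneStar ξ
      rw [if_pos hξ]
    · rw [RC.sub_toFun, Pi.sub_apply, RC.one_toFun]
      show (if (∅ : Finset X) ⊆ η then k ∅ else 0) - oneStar ∅ = 0
      rw [if_pos (Finset.empty_subset η), hk]
      simp [oneStar]
  have hcc : conv k1 k2 ∅ = 1 := by
    rw [show (conv k1 k2) ∅ = k1 ∅ * k2 ∅ by simp [conv], h1, h2, one_mul]
  have e1 := RC.lnStar_eq (conv k1 k2) η (RC.restr η (conv k1 k2) - 1)
    (hrestr_toFun (conv k1 k2) hcc).1 (hrestr_toFun (conv k1 k2) hcc).2 B (by omega)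
  have e2 := RC.lnStar_eq k1 η u (hrestr_toFun k1 h1).1 (hrestr_toFun k1 h1).2 B (by omega)
  have e3 := RC.lnStar_eq k2 η v (hrestr_toFun k2 h2).1 (hrestr_toFun k2 h2).2 B (by omega)
  show lnStar (conv k1 k2) η = lnStar k1 η + lnStar k2 η
  rw [e1, e2, e3, hkey, RC.add_toFun]
  rfl
end
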